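/- For every integer i ≥ 1 and every bounded Borel measurable function h : [0,1) → ℝ, the function x ↦ ∫_0^1 h(y) k_i(x, y) dy is continuous on [0,1) (strong Feller property of T̂_i on [0,1)). -/
import Mathlib


open MeasureTheory Filter Set

/-- The transition density `k_i(x,y)` of the generalized Kantorovich operator `T̂_i`
with respect to Lebesgue measure on `[0,1)`. -/
noncomputable def kantKernel (i : ℕ) (x y : ℝ) : ℝ :=
  ((i : ℝ) + 1) * (1 - x) ^ i *
    ∑' j : ℕ, (Nat.choose (i + j + 1) j : ℝ) * x ^ j *
      Set.indicator (Set.Ico ((j : ℝ) / ((i : ℝ) + j)) (((j : ℝ) + 1) / ((i : ℝ) + (j : ℝ) + 1)))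
        (fun _ => (1 : ℝ)) y

lemma kantKernel_eq (i : ℕ) (hi : 1 ≤ i) {y : ℝ} (hy : y ∈ Set.Ico (0:ℝ) 1) (x : ℝ) :
    kantKernel i x y = ((i : ℝ) + 1) * (1 - x) ^ i *
      ((Nat.choose (i + ⌊(i : ℝ) * y / (1 - y)⌋₊ + 1) ⌊(i : ℝ) * y / (1 - y)⌋₊ : ℝ)
        * x ^ ⌊(i : ℝ) * y / (1 - y)⌋₊) := by
  obtain ⟨hy0, hy1⟩ := hy
  have hy1' : (0:ℝ) < 1 - y := by linarith
  have hi' : (1:ℝ) ≤ (i : ℝ) := by exact_mod_cast hi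
  set t : ℝ := (i : ℝ) * y / (1 - y) with ht
  have ht0 : 0 ≤ t := div_nonneg (by positivity) hy1'.le
  set J : ℕ := ⌊t⌋₊ with hJ
  have hmem : ∀ j : ℕ,
      y ∈ Set.Ico ((j : ℝ) / ((i : ℝ) + j) : ℝ) (((j : ℝ) + 1) / ((i : ℝ) + (j : ℝ) + 1)) ↔
        ((j : ℝ) ≤ t ∧ t < (j : ℝ) + 1) := by
    intro j
    have hj0 : (0:ℝ) ≤ (j : ℝ) := Nat.cast_nonneg j
    have hij : (0:ℝ) < (i : ℝ) + j := by linarith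
    have hij1 : (0:ℝ) < (i : ℝ) + j + 1 := by linarith
    rw [Set.mem_Ico, div_le_iff₀ hij, lt_div_iff₀ hij1, ht, le_div_iff₀ hy1', div_lt_iff₀ hy1']
    constructor <;> rintro ⟨a, b⟩ <;> constructor <;> nlinarith
  have hJmem : y ∈ Set.Ico ((J : ℝ) / ((i : ℝ) + J) : ℝ)
      (((J : ℝ) + 1) / ((i : ℝ) + (J : ℝ) + 1)) :=
    (hmem J).2 ⟨Nat.floor_le ht0, Nat.lt_floor_add_one t⟩
  unfold kantKernel
  congr 1
  rw [tsum_eq_single J ?_]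
  · rw [Set.indicator_of_mem hJmem, mul_one]
  · intro j hj
    rcases Classical.em (y ∈ Set.Ico ((j : ℝ) / ((i : ℝ) + j) : ℝ)
        (((j : ℝ) + 1) / ((i : ℝ) + (j : ℝ) + 1))) with hmemj | hmemj
    · exfalso
      obtain ⟨a, b⟩ := (hmem j).1 hmemj
      exact hj ((Nat.floor_eq_iff ht0).2 ⟨a, b⟩).symm
    · rw [Set.indicator_of_notMem hmemj, mul_zero]

/-- boundedness of the coefficients `C(i+j+1, j) r^j` -/
lemma kant_coeff_bdd (i : ℕ) {r : ℝ} (hr0 : 0 < r) (hr1 : r < 1) :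
    ∃ M : ℝ, ∀ j : ℕ, (Nat.choose (i + j + 1) j : ℝ) * r ^ j ≤ M := by
  set f : ℕ → ℝ := fun j => (Nat.choose (i + j + 1) j : ℝ) * r ^ j with hf
  have hle : ∀ j : ℕ, f j ≤ ((i:ℝ)+1)^(i+1) * (((j:ℝ)+1)^(i+1) * r ^ j) := by
    intro j
    have h1 : (Nat.choose (i + j + 1) j : ℝ) ≤ (((i:ℝ)+1) * ((j:ℝ)+1))^(i+1) := by
      have e1 : Nat.choose (i + j + 1) j = Nat.choose (i + j + 1) (i + 1) := by
        have := Nat.choose_symm (n := i + j + 1) (k := j) (by omega)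
        rw [show i + j + 1 - j = i + 1 by omega] at this
        exact this.symm
      have e2 : Nat.choose (i + j + 1) (i + 1) ≤ (i + j + 1) ^ (i + 1) :=
        Nat.choose_le_pow _ _
      have e3 : ((i + j + 1 : ℕ) : ℝ) ^ (i+1) ≤ (((i:ℝ)+1) * ((j:ℝ)+1))^(i+1) := by
        apply pow_le_pow_left₀ (by positivity)
        push_cast
        nlinarith [Nat.cast_nonneg (α := ℝ) i, Nat.cast_nonneg (α := ℝ) j]
      calc (Nat.choose (i + j + 1) j : ℝ) = (Nat.choose (i + j + 1) (i+1) : ℝ) := by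
            rw [e1]
        _ ≤ ((i + j + 1 : ℕ) : ℝ) ^ (i+1) := by exact_mod_cast e2
        _ ≤ (((i:ℝ)+1) * ((j:ℝ)+1))^(i+1) := e3
    have : f j ≤ (((i:ℝ)+1) * ((j:ℝ)+1))^(i+1) * r ^ j :=
      mul_le_mul_of_nonneg_right h1 (by positivity)
    calc f j ≤ (((i:ℝ)+1) * ((j:ℝ)+1))^(i+1) * r ^ j := this
      _ = ((i:ℝ)+1)^(i+1) * (((j:ℝ)+1)^(i+1) * r ^ j) := by rw [mul_pow]; ring
  have hg : Tendsto (fun j : ℕ => ((i:ℝ)+1)^(i+1) * (((j:ℝ)+1)^(i+1) * r ^ j)) atTop (nhds 0) := by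
    have base : Tendsto (fun n : ℕ => (n:ℝ)^(i+1) * r ^ n) atTop (nhds 0) :=
      tendsto_pow_const_mul_const_pow_of_lt_one (i+1) hr0.le hr1
    have shift : Tendsto (fun j : ℕ => ((j+1 : ℕ):ℝ)^(i+1) * r ^ (j+1)) atTop (nhds 0) :=
      base.comp (tendsto_add_atTop_nat 1)
    have : Tendsto (fun j : ℕ => (((i:ℝ)+1)^(i+1) / r) * (((j+1 : ℕ):ℝ)^(i+1) * r ^ (j+1)))
        atTop (nhds 0) := by
      simpa using shift.const_mul ((((i:ℝ)+1)^(i+1)) / r)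
    convert this using 2 with j
    push_cast
    field_simp
    ring
  have hf0 : Tendsto f atTop (nhds 0) :=
    squeeze_zero (fun j => by positivity) hle hg
  obtain ⟨M, hM⟩ := hf0.bddAbove_range
  exact ⟨M, fun j => hM (Set.mem_range_self j)⟩

/-- Strong Feller property of `T̂_i` on `[0,1)`: for every bounded Borel function `h`,
the function `x ↦ ∫_0^1 h(y) k_i(x,y) dy` is continuous on `[0,1)`. -/
theorem kantorovich_strong_feller (i : ℕ) (hi : 1 ≤ i)
    (h : ℝ → ℝ) (hmeas : Measurable h) (hbdd : ∃ C : ℝ, ∀ y : ℝ, |h y| ≤ C) :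
    ContinuousOn (fun x => ∫ y in Set.Ico (0:ℝ) 1, h y * kantKernel i x y)
      (Set.Ico (0:ℝ) 1) := by
  obtain ⟨C, hC⟩ := hbdd
  have hC0 : 0 ≤ C := (abs_nonneg _).trans (hC 0)
  intro x₀ hx₀
  obtain ⟨hx₀0, hx₀1⟩ := hx₀
  set r : ℝ := (1 + x₀) / 2 with hr
  have hr0 : 0 < r := by rw [hr]; linarith
  have hr1 : r < 1 := by rw [hr]; linarith
  obtain ⟨M, hM⟩ := kant_coeff_bdd i hr0 hr1
  have hM0 : 0 ≤ M := le_trans (by positivity) (hM 0)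
  set J : ℝ → ℕ := fun y => ⌊(i : ℝ) * y / (1 - y)⌋₊ with hJdef
  have hJmeas : Measurable J := by
    apply Measurable.nat_floor
    exact (measurable_const.mul measurable_id).div (measurable_const.sub measurable_id)
  -- ball membership gives |x| ≤ r
  have hball : ∀ x ∈ Metric.ball x₀ ((1 - x₀)/2), |x| ≤ r := by
    intro x hx
    rw [Metric.mem_ball, Real.dist_eq] at hx
    rw [hr]
    have := abs_sub_abs_le_abs_sub x x₀
    rw [abs_of_nonneg hx₀0] at this
    linarith
  have hballmem : Metric.ball x₀ ((1 - x₀)/2) ∈ nhds x₀ :=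
    Metric.ball_mem_nhds x₀ (by linarith)
  apply ContinuousAt.continuousWithinAt
  apply MeasureTheory.continuousAt_of_dominated
      (bound := fun _ => C * (((i:ℝ)+1) * 2 ^ i * M))
  · filter_upwards with x
    apply (hmeas.aestronglyMeasurable.restrict).mul
    have hgmeas : Measurable (fun y : ℝ => ((i : ℝ) + 1) * (1 - x) ^ i *
        ((Nat.choose (i + J y + 1) (J y) : ℝ) * x ^ (J y))) := by
      exact (measurable_from_nat (f := fun n : ℕ => ((i : ℝ) + 1) * (1 - x) ^ i *
        ((Nat.choose (i + n + 1) n : ℝ) * x ^ n))).comp hJmeas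
    apply (hgmeas.aestronglyMeasurable.restrict).congr
    filter_upwards [ae_restrict_mem measurableSet_Ico] with y hy
    exact (kantKernel_eq i hi hy x).symm
  · filter_upwards [hballmem] with x hx
    filter_upwards [ae_restrict_mem measurableSet_Ico] with y hy
    rw [kantKernel_eq i hi hy x]
    have hxr : |x| ≤ r := hball x hx
    have h1x : |1 - x| ≤ 2 := by
      rw [abs_le] at hxr ⊢
      constructor <;> linarith [hxr.1, hxr.2]
    have key : |((i : ℝ) + 1) * (1 - x) ^ i *
        ((Nat.choose (i + J y + 1) (J y) : ℝ) * x ^ (J y))| ≤ ((i:ℝ)+1) * 2 ^ i * M := by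
      rw [abs_mul, abs_mul, abs_mul, abs_pow, abs_pow]
      have c1 : |((i:ℝ)+1)| = (i:ℝ)+1 := abs_of_nonneg (by positivity)
      have c2 : |(Nat.choose (i + J y + 1) (J y) : ℝ)| = (Nat.choose (i + J y + 1) (J y) : ℝ) :=
        abs_of_nonneg (Nat.cast_nonneg _)
      rw [c1, c2]
      have e1 : (Nat.choose (i + J y + 1) (J y) : ℝ) * |x| ^ (J y) ≤ M := by
        refine le_trans ?_ (hM (J y))
        apply mul_le_mul_of_nonneg_left _ (Nat.cast_nonneg _)
        exact pow_le_pow_left₀ (abs_nonneg x) hxr _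
      have e2 : |1 - x| ^ i ≤ 2 ^ i := pow_le_pow_left₀ (abs_nonneg _) h1x i
      exact mul_le_mul (mul_le_mul_of_nonneg_left e2 (by positivity)) e1
        (by positivity) (by positivity)
    rw [Real.norm_eq_abs, abs_mul]
    exact mul_le_mul (hC y) key (abs_nonneg _) hC0
  · exact integrable_const _
  · filter_upwards [ae_restrict_mem measurableSet_Ico] with y hy
    have : (fun x => h y * kantKernel i x y) = fun x =>
        h y * (((i : ℝ) + 1) * (1 - x) ^ i *
          ((Nat.choose (i + J y + 1) (J y) : ℝ) * x ^ (J y))) := by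
      funext x; rw [kantKernel_eq i hi hy x]
    rw [this]
    fun_prop
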